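/- Consider the eigenvalue problem N^{-1}M u = λu with M, N Hermitian and N positive definite, so N^{-1}M = X₁Λ₁Y₁^H + X₂Λ₂Y₂^H is diagonalizable with [X₁,X₂]^{-1} = [Y₁^H; Y₂^H]. Let (λ̂, û) be any scalar-vector pair, let δ = min_i |(Λ₂)_{ii} − λ̂| > 0, and let P = I − (X₁^†)^H X₁^H be the orthogonal projection onto the orthogonal complement of the column space of X₁. Then ‖Pû‖ ≤ √(κ(N)) ‖(N^{-1}M − λ̂ I) û‖ / δ, where κ(N) = ‖N‖‖N^{-1}‖. -/

import Mathlib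

open Matrix
open scoped ComplexOrder

/-- The spectral (ℓ₂ operator) norm of a complex matrix. -/
noncomputable def specNormC {m n : Type*} [Fintype m] [Fintype n] [DecidableEq n]
    (A : Matrix m n ℂ) : ℝ :=
  ‖LinearMap.toContinuousLinearMap (Matrix.toEuclideanLin A)‖

/-- The Euclidean norm of a complex vector. -/
noncomputable def evNorm {n : Type*} [Fintype n] (v : n → ℂ) : ℝ :=
  Real.sqrt (∑ i, ‖v i‖ ^ 2)

open scoped Matrix.Norms.L2Operator in
lemma specNormC_eq_l2 {m n : Type*} [Fintype m] [Fintype n] [DecidableEq n]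
    (A : Matrix m n ℂ) : specNormC A = ‖A‖ := rfl

lemma evNorm_eq_norm {n : Type*} [Fintype n] (v : n → ℂ) :
    evNorm v = ‖(WithLp.equiv 2 (n → ℂ)).symm v‖ := by
  simp [evNorm, EuclideanSpace.norm_eq]

open scoped Matrix.Norms.L2Operator in
lemma mulVec_norm_le_DK {m n : ℕ} (A : Matrix (Fin m) (Fin n) ℂ) (v : Fin n → ℂ) :
    ‖(WithLp.equiv 2 (Fin m → ℂ)).symm (A *ᵥ v)‖ ≤ ‖A‖ * ‖(WithLp.equiv 2 (Fin n → ℂ)).symm v‖ := by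
  simpa using A.l2_opNorm_mulVec ((WithLp.equiv 2 (Fin n → ℂ)).symm v)

lemma DK_equiv_symm_add {ι : Type*} (x y : ι → ℂ) : (WithLp.equiv 2 (ι → ℂ)).symm (x + y) =
    (WithLp.equiv 2 (ι → ℂ)).symm x + (WithLp.equiv 2 (ι → ℂ)).symm y := rfl

lemma DK_equiv_symm_sub {ι : Type*} (x y : ι → ℂ) : (WithLp.equiv 2 (ι → ℂ)).symm (x - y) =
    (WithLp.equiv 2 (ι → ℂ)).symm x - (WithLp.equiv 2 (ι → ℂ)).symm y := rfl

lemma DK_equiv_symm_smul {ι : Type*} (c : ℂ) (x : ι → ℂ) : (WithLp.equiv 2 (ι → ℂ)).symm (c • x) =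
    c • (WithLp.equiv 2 (ι → ℂ)).symm x := rfl

lemma DK_toEuclideanLin_equiv_symm {m n : Type*} [Fintype m] [Fintype n] [DecidableEq n]
    (A : Matrix m n ℂ) (v : n → ℂ) :
    toEuclideanLin A ((WithLp.equiv 2 (n → ℂ)).symm v) = (WithLp.equiv 2 (m → ℂ)).symm (A *ᵥ v) :=
  rfl

lemma DK_inner_equiv_symm {ι : Type*} [Fintype ι] (x y : ι → ℂ) :
    inner (𝕜 := ℂ) ((WithLp.equiv 2 (ι → ℂ)).symm x) ((WithLp.equiv 2 (ι → ℂ)).symm y) =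
      star x ⬝ᵥ y := by
  simp only [WithLp.equiv_symm_apply]
  rw [EuclideanSpace.inner_toLp_toLp, dotProduct_comm]

set_option maxHeartbeats 1600000 in
/-- Core spectral bound: if every eigenvector of the Hermitian matrix `Mt` either has eigenvalue
at distance at least `δ` from `lamhat` or lies in the column space of `LX1`, then the orthogonal
projection onto the orthocomplement of that column space satisfies a resolvent-type bound. -/
lemma davis_kahan_core {n r : ℕ} (Mt : Matrix (Fin n) (Fin n) ℂ) (hMt : Mt.IsHermitian)
    (LX1 : Matrix (Fin n) (Fin r) ℂ) (Λ1 : Fin r → ℂ)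
    (hMtLX1 : Mt * LX1 = LX1 * diagonal Λ1)
    (lamhat : ℂ) (δ : ℝ) (hδ : 0 < δ)
    (hievec : ∀ (μ : ℝ) (g : Fin n → ℂ), Mt *ᵥ g = (μ : ℂ) • g →
      (δ ≤ ‖(μ : ℂ) - lamhat‖ ∨ ∃ c : Fin r → ℂ, g = LX1 *ᵥ c))
    (w : EuclideanSpace ℂ (Fin n)) :
    δ * ‖((LinearMap.range (toEuclideanLin LX1))ᗮ.orthogonalProjectionOnto w :
        EuclideanSpace ℂ (Fin n))‖ ≤ ‖toEuclideanLin Mt w - lamhat • w‖ := by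
  set U : Submodule ℂ (EuclideanSpace ℂ (Fin n)) := LinearMap.range (toEuclideanLin LX1) with hU
  set T : EuclideanSpace ℂ (Fin n) →ₗ[ℂ] EuclideanSpace ℂ (Fin n) := toEuclideanLin Mt with hT
  have hTsym : T.IsSymmetric := Matrix.isHermitian_iff_isSymmetric.mp hMt
  -- U invariant under T
  have hUinv : ∀ u ∈ U, T u ∈ U := by
    rintro u ⟨c, rfl⟩
    refine ⟨toEuclideanLin (diagonal Λ1) c, ?_⟩
    have h1 : T (toEuclideanLin LX1 c) = toEuclideanLin (Mt * LX1) c := by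
      simp [hT, Matrix.toEuclideanLin_apply, Matrix.mulVec_mulVec]
    have h2 : toEuclideanLin LX1 (toEuclideanLin (diagonal Λ1) c)
        = toEuclideanLin (LX1 * diagonal Λ1) c := by
      simp [Matrix.toEuclideanLin_apply, Matrix.mulVec_mulVec]
    rw [h2, h1, hMtLX1]
  -- S := Uᗮ invariant under T
  have hSinv : ∀ v ∈ Uᗮ, T v ∈ Uᗮ := by
    intro v hv
    rw [Submodule.mem_orthogonal] at hv ⊢
    intro u hu
    rw [← hTsym u v]
    exact hv (T u) (hUinv u hu)
  have hTres := LinearMap.IsSymmetric.restrict_invariant (V := Uᗮ) hTsym hSinv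
  set d := Module.finrank ℂ ↥Uᗮ with hd
  set b := hTres.eigenvectorBasis rfl with hb
  set μ := hTres.eigenvalues (rfl : Module.finrank ℂ ↥Uᗮ = d) with hμ
  -- each eigenvalue of the restriction is far from lamhat
  have hfar : ∀ i : Fin d, δ ≤ ‖(μ i : ℂ) - lamhat‖ := by
    intro i
    have he : T.restrict hSinv (b i) = (μ i : ℂ) • b i := hTres.apply_eigenvectorBasis rfl i
    have he' : T ((b i : EuclideanSpace ℂ (Fin n)))
        = (μ i : ℂ) • (b i : EuclideanSpace ℂ (Fin n)) := by
      have := congrArg (Subtype.val) he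
      simpa using this
    set g : Fin n → ℂ := WithLp.equiv 2 (Fin n → ℂ) (b i : EuclideanSpace ℂ (Fin n)) with hg
    have hcoe : (b i : EuclideanSpace ℂ (Fin n)) = (WithLp.equiv 2 (Fin n → ℂ)).symm g := rfl
    have hmv : Mt *ᵥ g = (μ i : ℂ) • g := by
      have := he'
      rw [hcoe, hT, DK_toEuclideanLin_equiv_symm] at this
      have := congrArg (WithLp.equiv 2 (Fin n → ℂ)) this
      simpa using this
    rcases hievec (μ i) g hmv with h | ⟨c, hc⟩
    · exact h
    · exfalso
      have hmem : (b i : EuclideanSpace ℂ (Fin n)) ∈ U := by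
        refine ⟨(WithLp.equiv 2 (Fin r → ℂ)).symm c, ?_⟩
        rw [DK_toEuclideanLin_equiv_symm, ← hc, hcoe]
      have horth := (b i).2
      rw [Submodule.mem_orthogonal] at horth
      have : (inner (𝕜 := ℂ) (b i : EuclideanSpace ℂ (Fin n))
          (b i : EuclideanSpace ℂ (Fin n))) = 0 := horth _ hmem
      rw [inner_self_eq_zero] at this
      have hne := b.toBasis.ne_zero i
      simp only [OrthonormalBasis.coe_toBasis] at hne
      exact hne (Subtype.ext this)
  -- core quantitative bound on Uᗮ
  have hcore : ∀ v : ↥Uᗮ, δ * ‖(v : EuclideanSpace ℂ (Fin n))‖ ≤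
      ‖T (v : EuclideanSpace ℂ (Fin n)) - lamhat • (v : EuclideanSpace ℂ (Fin n))‖ := by
    intro v
    set z : ↥Uᗮ := T.restrict hSinv v - lamhat • v with hz
    have hzcoe : (z : EuclideanSpace ℂ (Fin n))
        = T ↑v - lamhat • (v : EuclideanSpace ℂ (Fin n)) := by
      simp [hz, LinearMap.restrict_coe_apply]
    rw [← hzcoe]
    have hnv : ‖(v : EuclideanSpace ℂ (Fin n))‖ = ‖b.repr v‖ := by
      rw [← Submodule.coe_norm]; exact (b.repr.norm_map v).symm
    have hnz : ‖(z : EuclideanSpace ℂ (Fin n))‖ = ‖b.repr z‖ := by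
      rw [← Submodule.coe_norm]; exact (b.repr.norm_map z).symm
    have hrepr : ∀ i, b.repr z i = ((μ i : ℂ) - lamhat) * b.repr v i := by
      intro i
      have h1 : b.repr (T.restrict hSinv v) i = (μ i : ℂ) * b.repr v i := by
        simpa using hTres.eigenvectorBasis_apply_self_apply rfl v i
      rw [hz, map_sub, _root_.map_smul]
      simp only [PiLp.sub_apply, PiLp.smul_apply, h1, smul_eq_mul]
      ring
    rw [hnv, hnz, EuclideanSpace.norm_eq, EuclideanSpace.norm_eq,
      ← Real.sqrt_sq hδ.le, ← Real.sqrt_mul (by positivity)]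
    apply Real.sqrt_le_sqrt
    rw [Finset.mul_sum]
    apply Finset.sum_le_sum
    intro i _
    rw [hrepr i, norm_mul]
    have hge : δ ≤ ‖(μ i : ℂ) - lamhat‖ := by
      simpa using hfar i
    have h2 : δ * ‖b.repr v i‖ ≤ ‖(μ i : ℂ) - lamhat‖ * ‖b.repr v i‖ :=
      mul_le_mul_of_nonneg_right hge (norm_nonneg _)
    calc δ ^ 2 * ‖b.repr v i‖ ^ 2 = (δ * ‖b.repr v i‖) ^ 2 := by ring
      _ ≤ (‖(μ i : ℂ) - lamhat‖ * ‖b.repr v i‖) ^ 2 := by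
          exact pow_le_pow_left₀ (by positivity) h2 2
  -- orthogonal decomposition of w
  set pu := U.orthogonalProjectionOnto w with hpu
  set pv := Uᗮ.orthogonalProjectionOnto w with hpv
  have hw : (pu : EuclideanSpace ℂ (Fin n)) + (pv : EuclideanSpace ℂ (Fin n)) = w :=
    by
      have h := U.starProjection_add_starProjection_orthogonal w
      rw [Submodule.starProjection_apply, Submodule.starProjection_apply] at h
      exact h
  have ha : T ↑pu - lamhat • (pu : EuclideanSpace ℂ (Fin n)) ∈ U :=
    U.sub_mem (hUinv _ pu.2) (U.smul_mem _ pu.2)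
  have hbb : T ↑pv - lamhat • (pv : EuclideanSpace ℂ (Fin n)) ∈ Uᗮ :=
    Submodule.sub_mem _ (hSinv _ pv.2) (Submodule.smul_mem _ _ pv.2)
  have hsplit : T w - lamhat • w =
      (T ↑pu - lamhat • (pu : EuclideanSpace ℂ (Fin n))) +
        (T ↑pv - lamhat • (pv : EuclideanSpace ℂ (Fin n))) := by
    rw [← hw, map_add, smul_add]
    abel
  have hinner : inner (𝕜 := ℂ) (T ↑pu - lamhat • (pu : EuclideanSpace ℂ (Fin n)))
      (T ↑pv - lamhat • (pv : EuclideanSpace ℂ (Fin n))) = 0 :=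
    ((Submodule.mem_orthogonal U _).mp hbb) _ ha
  have hpyth := norm_add_sq_eq_norm_sq_add_norm_sq_of_inner_eq_zero _ _ hinner
  have h3 : ‖T ↑pv - lamhat • (pv : EuclideanSpace ℂ (Fin n))‖ ≤ ‖T w - lamhat • w‖ := by
    rw [hsplit]
    nlinarith [norm_nonneg (T ↑pu - lamhat • (pu : EuclideanSpace ℂ (Fin n))),
      norm_nonneg (T ↑pv - lamhat • (pv : EuclideanSpace ℂ (Fin n))),
      norm_nonneg ((T ↑pu - lamhat • (pu : EuclideanSpace ℂ (Fin n))) +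
        (T ↑pv - lamhat • (pv : EuclideanSpace ℂ (Fin n))))]
  exact le_trans (hcore pv) h3

open scoped Matrix.Norms.L2Operator MatrixOrder in
set_option maxHeartbeats 1600000 in
/-- Generalized Davis–Kahan theorem: for the eigenvalue problem `N⁻¹M u = λu` with `M, N`
Hermitian and `N ≻ 0`, diagonalization `N⁻¹M = X₁Λ₁Y₁ᴴ + X₂Λ₂Y₂ᴴ` where
`[X₁,X₂]⁻¹ = [Y₁ᴴ; Y₂ᴴ]`, any pair `(λ̂, û)`, `δ = min_i |(Λ₂)ᵢᵢ − λ̂| > 0`, and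
`P = I − (X₁†)ᴴX₁ᴴ` the projection onto the orthogonal complement of the column space of
`X₁` (with `X1p` the Moore–Penrose pseudo-inverse of `X₁`):
`‖Pû‖ ≤ √(κ(N)) ‖(N⁻¹M − λ̂I)û‖ / δ` where `κ(N) = ‖N‖‖N‖⁻¹`. -/
theorem generalized_davis_kahan {n r s : ℕ}
    (M N : Matrix (Fin n) (Fin n) ℂ) (hM : M.IsHermitian) (hN : N.PosDef)
    (X1 : Matrix (Fin n) (Fin r) ℂ) (X2 : Matrix (Fin n) (Fin s) ℂ)
    (Y1H : Matrix (Fin r) (Fin n) ℂ) (Y2H : Matrix (Fin s) (Fin n) ℂ)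
    (hinv1 : fromCols X1 X2 * fromRows Y1H Y2H = 1)
    (hinv2 : fromRows Y1H Y2H * fromCols X1 X2 = 1)
    (Λ1 : Fin r → ℂ) (Λ2 : Fin s → ℂ)
    (hdiag : N⁻¹ * M = X1 * Matrix.diagonal Λ1 * Y1H + X2 * Matrix.diagonal Λ2 * Y2H)
    (lamhat : ℂ) (uhat : Fin n → ℂ)
    (δ : ℝ) (hδ : 0 < δ) (hsep : ∀ i, δ ≤ ‖Λ2 i - lamhat‖)
    (X1p : Matrix (Fin r) (Fin n) ℂ)
    (hmp1 : X1 * X1p * X1 = X1) (hmp2 : X1p * X1 * X1p = X1p)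
    (hmp3 : (X1 * X1p)ᴴ = X1 * X1p) (hmp4 : (X1p * X1)ᴴ = X1p * X1) :
    evNorm (((1 : Matrix (Fin n) (Fin n) ℂ) - X1pᴴ * X1ᴴ) *ᵥ uhat) ≤
      Real.sqrt (specNormC N * specNormC N⁻¹) *
        evNorm ((N⁻¹ * M - lamhat • 1) *ᵥ uhat) / δ := by
  classical
  -- block identities
  rw [fromRows_mul_fromCols, ← fromBlocks_one] at hinv2
  have h11 : Y1H * X1 = 1 := congrArg Matrix.toBlocks₁₁ hinv2
  have h21 : Y2H * X1 = 0 := congrArg Matrix.toBlocks₂₁ hinv2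
  have h22 : Y2H * X2 = 1 := congrArg Matrix.toBlocks₂₂ hinv2
  rw [fromCols_mul_fromRows] at hinv1
  -- square root of N
  set L := CFC.sqrt N with hLdef
  have hLL : L * L = N := CFC.sqrt_mul_sqrt_self N hN.posSemidef.nonneg
  have hLH : L.IsHermitian := (Matrix.nonneg_iff_posSemidef.mp (CFC.sqrt_nonneg N)).1
  have hNdet : IsUnit N.det := (Matrix.isUnit_iff_isUnit_det N).mp hN.isUnit
  have hLdet : IsUnit L.det := by
    refine isUnit_of_mul_isUnit_left (y := L.det) ?_
    rw [← det_mul, hLL]; exact hNdet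
  have hLiL : L⁻¹ * L = 1 := Matrix.nonsing_inv_mul L hLdet
  have hLLi : L * L⁻¹ = 1 := Matrix.mul_nonsing_inv L hLdet
  have hNinv : N⁻¹ = L⁻¹ * L⁻¹ := by rw [← hLL, Matrix.mul_inv_rev]
  have hLiH : (L⁻¹).IsHermitian := hLH.inv
  set Mt := L⁻¹ * M * L⁻¹ with hMtdef
  have hMt : Mt.IsHermitian := by
    show Mtᴴ = Mt
    rw [hMtdef, conjTranspose_mul, conjTranspose_mul, hLiH.eq, hM.eq, Matrix.mul_assoc]
  have hdX1 : N⁻¹ * M * X1 = X1 * diagonal Λ1 := by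
    rw [hdiag, Matrix.add_mul]
    simp only [Matrix.mul_assoc]
    rw [h11, h21]
    simp
  have hYd : Y2H * (N⁻¹ * M) = diagonal Λ2 * Y2H := by
    rw [hdiag, Matrix.mul_add]
    simp only [← Matrix.mul_assoc]
    rw [h21, h22, Matrix.zero_mul, Matrix.zero_mul, Matrix.one_mul, zero_add]
  have hML : Mt * L = L * (N⁻¹ * M) := by
    rw [hMtdef, hNinv, Matrix.mul_assoc (L⁻¹ * M), hLiL, Matrix.mul_one,
      ← Matrix.mul_assoc, ← Matrix.mul_assoc, hLLi, Matrix.one_mul]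
  have hNML : N⁻¹ * M * L⁻¹ = L⁻¹ * Mt := by
    rw [hMtdef, hNinv, Matrix.mul_assoc, Matrix.mul_assoc, Matrix.mul_assoc]
  have hMtLX1 : Mt * (L * X1) = (L * X1) * diagonal Λ1 := by
    rw [← Matrix.mul_assoc, hML, Matrix.mul_assoc, hdX1, ← Matrix.mul_assoc]
  have hnormN : specNormC N = ‖L‖ * ‖L‖ := by
    rw [specNormC_eq_l2, ← hLL]
    calc ‖L * L‖ = ‖Lᴴ * L‖ := by rw [hLH.eq]
    _ = ‖L‖ * ‖L‖ := L.l2_opNorm_conjTranspose_mul_self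
  have hnormNi : specNormC N⁻¹ = ‖L⁻¹‖ * ‖L⁻¹‖ := by
    rw [specNormC_eq_l2, hNinv]
    calc ‖L⁻¹ * L⁻¹‖ = ‖L⁻¹ᴴ * L⁻¹‖ := by rw [hLiH.eq]
    _ = ‖L⁻¹‖ * ‖L⁻¹‖ := (L⁻¹).l2_opNorm_conjTranspose_mul_self
  -- eigenvector dichotomy
  have hievec : ∀ (μ : ℝ) (g : Fin n → ℂ), Mt *ᵥ g = (μ : ℂ) • g →
      (δ ≤ ‖(μ : ℂ) - lamhat‖ ∨ ∃ c : Fin r → ℂ, g = (L * X1) *ᵥ c) := by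
    intro μ g hmv
    set β := Y2H *ᵥ (L⁻¹ *ᵥ g) with hβ
    have hb2 : diagonal Λ2 *ᵥ β = (μ : ℂ) • β := by
      calc diagonal Λ2 *ᵥ β = (diagonal Λ2 * Y2H) *ᵥ (L⁻¹ *ᵥ g) := by
            rw [hβ, Matrix.mulVec_mulVec]
      _ = (Y2H * (N⁻¹ * M)) *ᵥ (L⁻¹ *ᵥ g) := by rw [← hYd]
      _ = Y2H *ᵥ ((N⁻¹ * M * L⁻¹) *ᵥ g) := by
            rw [← Matrix.mulVec_mulVec, Matrix.mulVec_mulVec (M := N⁻¹ * M)]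
      _ = Y2H *ᵥ (L⁻¹ *ᵥ (Mt *ᵥ g)) := by rw [hNML, ← Matrix.mulVec_mulVec]
      _ = (μ : ℂ) • β := by rw [hmv, Matrix.mulVec_smul, Matrix.mulVec_smul, hβ]
    by_cases hbz : β = 0
    · right
      set α := Y1H *ᵥ (L⁻¹ *ᵥ g) with hα
      have hdec : L⁻¹ *ᵥ g = X1 *ᵥ α + X2 *ᵥ β := by
        calc L⁻¹ *ᵥ g = (1 : Matrix (Fin n) (Fin n) ℂ) *ᵥ (L⁻¹ *ᵥ g) := by
              rw [Matrix.one_mulVec]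
        _ = (X1 * Y1H) *ᵥ (L⁻¹ *ᵥ g) + (X2 * Y2H) *ᵥ (L⁻¹ *ᵥ g) := by
              rw [← Matrix.add_mulVec, hinv1]
        _ = X1 *ᵥ α + X2 *ᵥ β := by
              rw [hα, hβ]; simp only [Matrix.mulVec_mulVec, Matrix.mul_assoc]
      refine ⟨α, ?_⟩
      have : g = L *ᵥ (L⁻¹ *ᵥ g) := by
        rw [Matrix.mulVec_mulVec, hLLi, Matrix.one_mulVec]
      rw [this, hdec, hbz, Matrix.mulVec_zero, add_zero, Matrix.mulVec_mulVec]
    · left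
      obtain ⟨j, hj⟩ := Function.ne_iff.mp hbz
      have hjj : Λ2 j * β j = (μ : ℂ) * β j := by
        have := congrFun hb2 j
        rw [Matrix.mulVec_diagonal] at this
        simpa using this
      have : Λ2 j = (μ : ℂ) := mul_right_cancel₀ hj hjj
      rw [← this]
      exact hsep j
  -- Euclidean setup
  set w : EuclideanSpace ℂ (Fin n) := (WithLp.equiv 2 (Fin n → ℂ)).symm (L *ᵥ uhat) with hw
  have hcore := davis_kahan_core Mt hMt (L * X1) Λ1 hMtLX1 lamhat δ hδ hievec w
  set U : Submodule ℂ (EuclideanSpace ℂ (Fin n)) :=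
    LinearMap.range (toEuclideanLin (L * X1)) with hU
  set pu := U.orthogonalProjectionOnto w with hpu
  set pv := Uᗮ.orthogonalProjectionOnto w with hpv
  have hwdec : (pu : EuclideanSpace ℂ (Fin n)) + (pv : EuclideanSpace ℂ (Fin n)) = w :=
    by
      have h := U.starProjection_add_starProjection_orthogonal w
      rw [Submodule.starProjection_apply, Submodule.starProjection_apply] at h
      exact h
  obtain ⟨c', hc'⟩ := pu.2
  set c : Fin r → ℂ := WithLp.equiv 2 (Fin r → ℂ) c' with hc
  have hpuv : (pu : EuclideanSpace ℂ (Fin n))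
      = (WithLp.equiv 2 (Fin n → ℂ)).symm ((L * X1) *ᵥ c) := by
    rw [← hc']
    have : c' = (WithLp.equiv 2 (Fin r → ℂ)).symm c := rfl
    rw [this, DK_toEuclideanLin_equiv_symm]
  set x : Fin n → ℂ := X1 *ᵥ c with hx
  -- the residual vector
  set rv : Fin n → ℂ := (N⁻¹ * M - lamhat • 1) *ᵥ uhat with hrv
  -- step 1: projection inequality
  set Pm : Matrix (Fin n) (Fin n) ℂ := 1 - X1 * X1p with hPm
  have hPmeq : (1 : Matrix (Fin n) (Fin n) ℂ) - X1pᴴ * X1ᴴ = Pm := by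
    rw [hPm, ← Matrix.conjTranspose_mul, hmp3]
  have h5 : X1ᴴ * (X1 * X1p) = X1ᴴ := by
    have := congrArg Matrix.conjTranspose hmp1
    rw [Matrix.conjTranspose_mul, hmp3] at this
    exact this
  have hX1HPm : X1ᴴ * Pm = 0 := by
    rw [hPm, Matrix.mul_sub, Matrix.mul_one, h5, sub_self]
  have horth : ∀ dv : Fin r → ℂ,
      inner (𝕜 := ℂ) ((WithLp.equiv 2 (Fin n → ℂ)).symm (X1 *ᵥ dv))
        ((WithLp.equiv 2 (Fin n → ℂ)).symm (Pm *ᵥ uhat)) = 0 := by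
    intro dv
    rw [DK_inner_equiv_symm, Matrix.star_mulVec,
      ← Matrix.dotProduct_mulVec, Matrix.mulVec_mulVec, hX1HPm, Matrix.zero_mulVec,
      dotProduct_zero]
  have hdecomp : uhat - x = Pm *ᵥ uhat + X1 *ᵥ (X1p *ᵥ uhat - c) := by
    rw [hPm, Matrix.sub_mulVec, Matrix.one_mulVec, Matrix.mulVec_sub, hx,
      ← Matrix.mulVec_mulVec]
    abel
  have key1 : evNorm (Pm *ᵥ uhat) ≤ evNorm (uhat - x) := by
    rw [evNorm_eq_norm, evNorm_eq_norm, hdecomp, DK_equiv_symm_add]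
    have hinner0 : inner (𝕜 := ℂ) ((WithLp.equiv 2 (Fin n → ℂ)).symm (Pm *ᵥ uhat))
        ((WithLp.equiv 2 (Fin n → ℂ)).symm (X1 *ᵥ (X1p *ᵥ uhat - c))) = 0 := by
      rw [← inner_conj_symm, horth (X1p *ᵥ uhat - c), map_zero]
    have hpyth := norm_add_sq_eq_norm_sq_add_norm_sq_of_inner_eq_zero _ _ hinner0
    nlinarith [norm_nonneg ((WithLp.equiv 2 (Fin n → ℂ)).symm (Pm *ᵥ uhat)),
      norm_nonneg ((WithLp.equiv 2 (Fin n → ℂ)).symm (X1 *ᵥ (X1p *ᵥ uhat - c))),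
      norm_nonneg ((WithLp.equiv 2 (Fin n → ℂ)).symm (Pm *ᵥ uhat) +
        (WithLp.equiv 2 (Fin n → ℂ)).symm (X1 *ᵥ (X1p *ᵥ uhat - c)))]
  -- step 2: identify uhat - x with L⁻¹ applied to pv
  have hkey : (WithLp.equiv 2 (Fin n → ℂ)).symm (L *ᵥ (uhat - x))
      = (pv : EuclideanSpace ℂ (Fin n)) := by
    rw [Matrix.mulVec_sub, hx, Matrix.mulVec_mulVec, DK_equiv_symm_sub]
    rw [← hw, ← hwdec, hpuv]
    abel
  have huhatx : uhat - x = L⁻¹ *ᵥ (WithLp.equiv 2 (Fin n → ℂ)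
      (pv : EuclideanSpace ℂ (Fin n))) := by
    have h6 : L *ᵥ (uhat - x)
        = WithLp.equiv 2 (Fin n → ℂ) (pv : EuclideanSpace ℂ (Fin n)) := by
      have := congrArg (WithLp.equiv 2 (Fin n → ℂ)) hkey
      simpa using this
    rw [← h6, Matrix.mulVec_mulVec, hLiL, Matrix.one_mulVec]
  have key2 : evNorm (uhat - x) ≤ ‖L⁻¹‖ * ‖(pv : EuclideanSpace ℂ (Fin n))‖ := by
    rw [evNorm_eq_norm, huhatx]
    have := mulVec_norm_le_DK L⁻¹ (WithLp.equiv 2 (Fin n → ℂ) (pv : EuclideanSpace ℂ (Fin n)))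
    simpa using this
  -- step 3: resolvent bound
  have hres : toEuclideanLin Mt w - lamhat • w
      = (WithLp.equiv 2 (Fin n → ℂ)).symm (L *ᵥ rv) := by
    rw [hw, DK_toEuclideanLin_equiv_symm, ← DK_equiv_symm_smul,
      ← DK_equiv_symm_sub]
    congr 1
    rw [Matrix.mulVec_mulVec, ← Matrix.smul_mulVec, ← Matrix.sub_mulVec, hrv,
      Matrix.mulVec_mulVec]
    congr 1
    rw [Matrix.mul_sub, hML, mul_smul_comm, Matrix.mul_one]
  have key3 : δ * ‖(pv : EuclideanSpace ℂ (Fin n))‖ ≤ ‖L‖ * evNorm rv := by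
    refine le_trans hcore ?_
    rw [hres, evNorm_eq_norm]
    exact mulVec_norm_le_DK L rv
  -- assembly
  have hLnn : (0:ℝ) ≤ ‖L‖ := norm_nonneg _
  have hLinn : (0:ℝ) ≤ ‖L⁻¹‖ := norm_nonneg _
  have hsqrt : Real.sqrt (specNormC N * specNormC N⁻¹) = ‖L‖ * ‖L⁻¹‖ := by
    rw [hnormN, hnormNi]
    rw [show ‖L‖ * ‖L‖ * (‖L⁻¹‖ * ‖L⁻¹‖) = (‖L‖ * ‖L⁻¹‖)^2 by ring]
    exact Real.sqrt_sq (mul_nonneg hLnn hLinn)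
  rw [hPmeq, hsqrt]
  have hpvle : ‖(pv : EuclideanSpace ℂ (Fin n))‖ ≤ ‖L‖ * evNorm rv / δ := by
    rw [le_div_iff₀ hδ]
    calc ‖(pv : EuclideanSpace ℂ (Fin n))‖ * δ = δ * ‖(pv : EuclideanSpace ℂ (Fin n))‖ := by ring
    _ ≤ ‖L‖ * evNorm rv := key3
  calc evNorm (Pm *ᵥ uhat) ≤ evNorm (uhat - x) := key1
  _ ≤ ‖L⁻¹‖ * ‖(pv : EuclideanSpace ℂ (Fin n))‖ := key2
  _ ≤ ‖L⁻¹‖ * (‖L‖ * evNorm rv / δ) := by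
      exact mul_le_mul_of_nonneg_left hpvle hLinn
  _ = ‖L‖ * ‖L⁻¹‖ * evNorm rv / δ := by ring
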